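/- (Leave-one-out weights.) Let n ≥ 2, let I be a uniform random subset of {1,…,n} of cardinality n−1, and set W_i := (n/(n−1))·1_{i∈I}. Then for any subset Λ ⊆ {1,…,n} with card(Λ) = m ≥ 2, any i ∈ Λ, and W̄ := m^{−1} Σ_{j∈Λ} W_j, one has W̄ > 0 almost surely and E[(W_i − W̄)²/W̄] = 1/(n−1). -/

import Mathlib

open MeasureTheory ProbabilityTheory Finset

instance {α : Type*} : MeasurableSpace (Finset α) := ⊤

noncomputable def unifM (α : Type*) [Fintype α] [MeasurableSpace α] : Measure α :=
  (Fintype.card α : ENNReal)⁻¹ • Measure.count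

noncomputable def looW (n : ℕ) (i : Fin n) (I : {t : Finset (Fin n) // t.card = n - 1}) : ℝ :=
  if i ∈ I.1 then (n : ℝ) / (n - 1) else 0

instance mscFinsetSub {α : Type*} {p : Finset α → Prop} :
    MeasurableSingletonClass {t : Finset α // p t} := by
  constructor
  intro a
  rw [show (MeasurableSet {a}) = MeasurableSet[MeasurableSpace.comap Subtype.val ⊤] {a} from rfl,
    MeasurableSpace.measurableSet_comap]
  exact ⟨{a.1}, trivial, by ext x; simp [Subtype.ext_iff]⟩

/-- **`R_{2,W}` for leave-one-out weights**: for `n ≥ 2`, any cell `Λ` of cardinality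
`m ≥ 2`, any `i ∈ Λ` and `W̄ = m⁻¹ Σ_{j∈Λ} W_j`, one has `W̄ > 0` almost surely and
`E[(W_i − W̄)²/W̄] = 1/(n−1)`. -/
theorem loo_R2 (n : ℕ) (hn : 2 ≤ n)
    (Λ : Finset (Fin n)) (m : ℕ) (hm : Λ.card = m) (hm2 : 2 ≤ m) (i : Fin n) (hi : i ∈ Λ) :
    (∀ᵐ I ∂(unifM {t : Finset (Fin n) // t.card = n - 1}),
        0 < (∑ j ∈ Λ, looW n j I) / m) ∧
      ∫ I, (looW n i I - (∑ j ∈ Λ, looW n j I) / m) ^ 2 / ((∑ j ∈ Λ, looW n j I) / m)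
          ∂(unifM {t : Finset (Fin n) // t.card = n - 1}) =
        1 / ((n : ℝ) - 1) := by
  have hn2 : (2:ℝ) ≤ (n:ℝ) := by exact_mod_cast hn
  have hn1 : (0:ℝ) < (n:ℝ) - 1 := by linarith
  set c : ℝ := (n:ℝ) / ((n:ℝ) - 1) with hc
  have hcpos : 0 < c := by positivity
  have hm2' : (2:ℝ) ≤ (m:ℝ) := by exact_mod_cast hm2
  have hmpos : (0:ℝ) < m := by linarith
  -- every admissible I is the complement of a singleton
  have key : ∀ I : {t : Finset (Fin n) // t.card = n - 1}, ∃ k : Fin n, I.1 = {k}ᶜ := by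
    intro I
    have h1 : I.1ᶜ.card = 1 := by
      have h := Finset.card_compl I.1
      rw [I.2, Fintype.card_fin] at h
      omega
    obtain ⟨k, hk⟩ := Finset.card_eq_one.mp h1
    exact ⟨k, by rw [← compl_compl I.1, hk]⟩
  -- sum formula
  have hsum : ∀ (k : Fin n) (I : {t : Finset (Fin n) // t.card = n - 1}), I.1 = {k}ᶜ →
      ∑ j ∈ Λ, looW n j I = (m:ℝ) * c - (if k ∈ Λ then c else 0) := by
    intro k I hI
    have h1 : ∀ j ∈ Λ, looW n j I = c - (if j = k then c else 0) := by
      intro j _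
      simp only [looW, hI, Finset.mem_compl, Finset.mem_singleton, hc]
      by_cases h : j = k <;> simp [h]
    rw [Finset.sum_congr rfl h1, Finset.sum_sub_distrib, Finset.sum_const, hm,
      Finset.sum_ite_eq' Λ k, nsmul_eq_mul]
  have hWi : ∀ (k : Fin n) (I : {t : Finset (Fin n) // t.card = n - 1}), I.1 = {k}ᶜ →
      looW n i I = (if i = k then 0 else c) := by
    intro k I hI
    simp only [looW, hI, Finset.mem_compl, Finset.mem_singleton, hc]
    by_cases h : i = k <;> simp [h]
  -- positivity, pointwise
  have hpos : ∀ I : {t : Finset (Fin n) // t.card = n - 1},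
      0 < (∑ j ∈ Λ, looW n j I) / m := by
    intro I
    obtain ⟨k, hk⟩ := key I
    rw [hsum k I hk]
    apply div_pos _ hmpos
    have hb : (if k ∈ Λ then c else 0) ≤ c := by split_ifs <;> linarith
    nlinarith
  refine ⟨Filter.Eventually.of_forall hpos, ?_⟩
  -- cardinality of index type
  have hcard : Fintype.card {t : Finset (Fin n) // t.card = n - 1} = n := by
    rw [Fintype.card_finset_len, Fintype.card_fin,
      Nat.choose_symm (show 1 ≤ n by omega), Nat.choose_one_right]
  -- bijection from Fin n
  have hnn : (n:ENNReal) ≠ 0 := by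
    simp; omega
  have hfin : IsProbabilityMeasure (unifM {t : Finset (Fin n) // t.card = n - 1}) := by
    constructor
    rw [unifM, Measure.smul_apply, Measure.count_univ, ENat.card_eq_coe_fintype_card, ENat.toENNReal_coe, hcard, smul_eq_mul,
      ENNReal.inv_mul_cancel hnn (ENNReal.natCast_ne_top n)]
  have hsingle : ∀ I : {t : Finset (Fin n) // t.card = n - 1},
      ((unifM {t : Finset (Fin n) // t.card = n - 1}) {I}).toReal = (n:ℝ)⁻¹ := by
    intro I
    rw [unifM, Measure.smul_apply, Measure.count_singleton, hcard, smul_eq_mul, mul_one,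
      ENNReal.toReal_inv]
    simp
  set F : {t : Finset (Fin n) // t.card = n - 1} → ℝ := fun I =>
    (looW n i I - (∑ j ∈ Λ, looW n j I) / m) ^ 2 / ((∑ j ∈ Λ, looW n j I) / m) with hF
  have hint : ∫ I, F I ∂(unifM {t : Finset (Fin n) // t.card = n - 1}) =
      ∑ I, ((unifM {t : Finset (Fin n) // t.card = n - 1}) {I}).toReal • F I :=
    integral_fintype (hf := Integrable.of_finite)
  rw [show (∫ I, (looW n i I - (∑ j ∈ Λ, looW n j I) / m) ^ 2 / ((∑ j ∈ Λ, looW n j I) / m)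
      ∂(unifM {t : Finset (Fin n) // t.card = n - 1})) = ∫ I, F I
      ∂(unifM {t : Finset (Fin n) // t.card = n - 1}) from rfl, hint]
  -- transport sum to Fin n
  have hcardc : ∀ k : Fin n, ({k}ᶜ : Finset (Fin n)).card = n - 1 := by
    intro k
    rw [Finset.card_compl, Finset.card_singleton, Fintype.card_fin]
  set e : Fin n → {t : Finset (Fin n) // t.card = n - 1} := fun k => ⟨{k}ᶜ, hcardc k⟩ with he
  have hbij : Function.Bijective e := by
    rw [Fintype.bijective_iff_injective_and_card]
    refine ⟨fun a b hab => ?_, by rw [Fintype.card_fin, hcard]⟩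
    have : ({a} : Finset (Fin n)) = {b} := by
      have := congrArg (fun x => (Subtype.val x)ᶜ) hab
      simpa [he] using this
    simpa using this
  rw [← Fintype.sum_bijective e hbij _ _ (fun k => rfl)]
  -- compute each term
  have hval : ∀ k : Fin n, F (e k) =
      if k = i then ((m:ℝ) - 1) * c / m
      else if k ∈ Λ then c / ((m:ℝ) * ((m:ℝ) - 1)) else 0 := by
    intro k
    have hIk : (e k).1 = ({k}ᶜ : Finset (Fin n)) := rfl
    have hs := hsum k (e k) hIk
    have hw := hWi k (e k) hIk
    have hm1 : (0:ℝ) < (m:ℝ) - 1 := by linarith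
    have hd : (0:ℝ) < (m:ℝ) * c - c := by nlinarith
    have hX : (0:ℝ) < ((m:ℝ) * c - c) / m := div_pos hd hmpos
    by_cases hki : k = i
    · have hkΛ : k ∈ Λ := by rw [hki]; exact hi
      rw [if_pos hki]
      simp only [hF, hs, hw, if_pos hki.symm, if_pos hkΛ]
      rw [zero_sub, neg_sq, sq, mul_div_assoc, div_self hX.ne', mul_one,
        div_eq_div_iff hmpos.ne' hmpos.ne']
      ring
    · have hik : ¬ (i = k) := fun h => hki h.symm
      rw [if_neg hki]
      simp only [hF, hs, hw, if_neg hik]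
      by_cases hkΛ : k ∈ Λ
      · simp only [if_pos hkΛ]
        rw [div_eq_div_iff hX.ne' (by positivity)]
        field_simp
        ring
      · simp only [if_neg hkΛ, sub_zero]
        have h0 : c - (m:ℝ) * c / m = 0 := by field_simp; ring
        rw [h0]
        simp
  have hconst : ∀ k : Fin n,
      ((unifM {t : Finset (Fin n) // t.card = n - 1}) {e k}).toReal • F (e k)
        = (n:ℝ)⁻¹ * F (e k) := by
    intro k; rw [hsingle, smul_eq_mul]
  rw [Finset.sum_congr rfl (fun k _ => (hconst k).trans (by rw [hval k])), ← Finset.mul_sum]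
  -- split the sum
  have hsplit : (∑ k : Fin n, (if k = i then ((m:ℝ) - 1) * c / m
      else if k ∈ Λ then c / ((m:ℝ) * ((m:ℝ) - 1)) else 0)) =
      ((m:ℝ) - 1) * c / m + ((m:ℝ) - 1) * (c / ((m:ℝ) * ((m:ℝ) - 1))) := by
    rw [← Finset.sum_add_sum_compl Λ]
    have h1 : ∑ k ∈ Λᶜ, (if k = i then ((m:ℝ) - 1) * c / m
        else if k ∈ Λ then c / ((m:ℝ) * ((m:ℝ) - 1)) else 0) = 0 := by
      apply Finset.sum_eq_zero
      intro k hk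
      rw [Finset.mem_compl] at hk
      rw [if_neg (fun h => hk (by rw [h]; exact hi)), if_neg hk]
    rw [h1, add_zero, ← Finset.add_sum_erase Λ _ hi, if_pos rfl]
    congr 1
    rw [Finset.sum_congr rfl (fun k hk => ?_), Finset.sum_const, Finset.card_erase_of_mem hi,
      hm, nsmul_eq_mul, Nat.cast_sub (by omega), Nat.cast_one]
    rw [if_neg (Finset.ne_of_mem_erase hk), if_pos (Finset.mem_of_mem_erase hk)]
  rw [hsplit]
  have hm1 : (0:ℝ) < (m:ℝ) - 1 := by linarith
  have hn0 : (0:ℝ) < (n:ℝ) := by linarith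
  rw [hc]
  field_simp
  ring
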